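/- Let S = ⟨a,b⟩ be an orthodox semigroup generated by mutually inverse elements a, b satisfying ab = a²b² and ba ≠ b²a². Then S is combinatorial: Green's H-relation on S is the identity relation. -/

import Mathlib

namespace PaperStmt

/-- `S` is a regular semigroup. -/
def RegularSgp (S : Type*) [Semigroup S] : Prop := ∀ x : S, ∃ y, x * y * x = x

/-- The idempotents of `S` form a subsemigroup. -/
def IdemClosed (S : Type*) [Semigroup S] : Prop :=
  ∀ e f : S, e * e = e → f * f = f → (e * f) * (e * f) = e * f

/-- An orthodox semigroup: regular with idempotents closed under multiplication. -/
def Orthodox (S : Type*) [Semigroup S] : Prop := RegularSgp S ∧ IdemClosed S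

/-- Green's R-relation in a monoid. -/
def GreenRM {M : Type*} [Monoid M] (x y : M) : Prop :=
  (∃ s, x = y * s) ∧ (∃ s, y = x * s)

/-- Green's L-relation in a monoid. -/
def GreenLM {M : Type*} [Monoid M] (x y : M) : Prop :=
  (∃ s, x = s * y) ∧ (∃ s, y = s * x)

/-- Green's R-relation on a semigroup, computed in S¹ = WithOne S. -/
def GreenR {S : Type*} [Semigroup S] (x y : S) : Prop :=
  GreenRM (x : WithOne S) (y : WithOne S)

/-- Green's L-relation on a semigroup. -/
def GreenL {S : Type*} [Semigroup S] (x y : S) : Prop :=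
  GreenLM (x : WithOne S) (y : WithOne S)

/-- Green's H-relation. -/
def GreenH {S : Type*} [Semigroup S] (x y : S) : Prop := GreenR x y ∧ GreenL x y

/-- Green's D-relation, D = L ∘ R. -/
def GreenD {S : Type*} [Semigroup S] (x y : S) : Prop :=
  ∃ z : S, GreenL x z ∧ GreenR z y

/-- `a` belongs to some subgroup of `S`. -/
def InSubgroup {S : Type*} [Semigroup S] (a : S) : Prop :=
  ∃ G : Set S, a ∈ G ∧ (∀ x ∈ G, ∀ y ∈ G, x * y ∈ G) ∧
    ∃ e ∈ G, (∀ x ∈ G, e * x = x ∧ x * e = x) ∧ ∀ x ∈ G, ∃ y ∈ G, x * y = e ∧ y * x = e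

/-- The H-class of `a` is a group with identity element `e`. -/
def HClassGroupWithId {S : Type*} [Semigroup S] (a e : S) : Prop :=
  GreenH e a ∧ e * e = e ∧ (∀ x, GreenH x a → e * x = x ∧ x * e = x) ∧
    ∀ x, GreenH x a → ∃ y, GreenH y a ∧ x * y = e ∧ y * x = e

set_option linter.unusedSectionVars false

section Aux
variable {M : Type*} [Monoid M]

/-- mutual inverses -/
def PInv (x y : M) : Prop := x * y * x = x ∧ y * x * y = y

def Gam (x y : M) : Prop := ∃ z, PInv x z ∧ PInv y z

def Rho : M → M → Prop := Relation.ReflTransGen Gam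

def Idem (x : M) : Prop := x * x = x

def EConj (x y : M) : Prop := ∃ u v, Idem u ∧ Idem v ∧ x = u * (y * v)

/-- turn an equality p*q*r = s into its tailed right-assoc form -/
lemma tail3 {p q r s : M} (h : p * q * r = s) : ∀ t : M, p * (q * (r * t)) = s * t := by
  intro t; rw [← mul_assoc, ← mul_assoc, h]

lemma tail2 {p q s : M} (h : p * q = s) : ∀ t : M, p * (q * t) = s * t := by
  intro t; rw [← mul_assoc, h]

lemma pinv_symm {x y : M} (h : PInv x y) : PInv y x := ⟨h.2, h.1⟩

lemma pinv_of_reg (hreg : ∀ x : M, ∃ y, x * y * x = x) (x : M) : ∃ y, PInv x y := by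
  obtain ⟨c, hc⟩ := hreg x
  have hct : ∀ t, x * (c * (x * t)) = x * t := tail3 hc
  have hcu : x * (c * x) = x := by rw [← mul_assoc, hc]
  refine ⟨c * x * c, ?_, ?_⟩
  · show x * (c * x * c) * x = x
    calc x * (c * x * c) * x = x * (c * (x * (c * x))) := by simp only [mul_assoc]
    _ = x * (c * x) := hct _
    _ = x := hcu
  · show (c * x * c) * x * (c * x * c) = c * x * c
    calc (c * x * c) * x * (c * x * c) = c * (x * (c * (x * (c * (x * c))))) := by
          simp only [mul_assoc]
      _ = c * (x * (c * (x * c))) := by rw [hct]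
      _ = c * (x * c) := by rw [hct]
      _ = c * x * c := by rw [mul_assoc]

lemma gam_symm {x y : M} (h : Gam x y) : Gam y x := by
  obtain ⟨z, h1, h2⟩ := h; exact ⟨z, h2, h1⟩

lemma gam_refl (hreg : ∀ x : M, ∃ y, x * y * x = x) (x : M) : Gam x x := by
  obtain ⟨y, hy⟩ := pinv_of_reg hreg x; exact ⟨y, hy, hy⟩

lemma rho_refl (x : M) : Rho x x := Relation.ReflTransGen.refl

lemma rho_trans {x y z : M} (h1 : Rho x y) (h2 : Rho y z) : Rho x z := h1.trans h2

lemma rho_symm {x y : M} (h : Rho x y) : Rho y x :=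
  by
    induction h with
    | refl => exact Relation.ReflTransGen.refl
    | tail _ hs ih => exact (Relation.ReflTransGen.single (gam_symm hs)).trans ih

lemma rho_of_gam {x y : M} (h : Gam x y) : Rho x y := Relation.ReflTransGen.single h

/-- the orthodox product lemma : inverses multiply contravariantly -/
lemma pinv_mul (hE : ∀ e f : M, Idem e → Idem f → Idem (e * f))
    {x z y w : M} (hxz : PInv x z) (hyw : PInv y w) : PInv (x * y) (w * z) := by
  obtain ⟨hx1, hx2⟩ := hxz
  obtain ⟨hy1, hy2⟩ := hyw
  have he1 : Idem (z * x) := by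
    show z*x*(z*x) = z*x
    calc z*x*(z*x) = z*(x*z*x) := by simp only [mul_assoc]
    _ = z*x := by rw [hx1]
  have hf1 : Idem (y * w) := by
    show y*w*(y*w) = y*w
    calc y*w*(y*w) = y*(w*y*w) := by simp only [mul_assoc]
    _ = y*w := by rw [hy2]
  -- tailed versions
  have t_hx1 : ∀ t, x * (z * (x * t)) = x * t := tail3 hx1
  have t_hx2 : ∀ t, z * (x * (z * t)) = z * t := tail3 hx2
  have t_hy1 : ∀ t, y * (w * (y * t)) = y * t := tail3 hy1
  have t_hy2 : ∀ t, w * (y * (w * t)) = w * t := tail3 hy2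
  have u_hy1 : y * (w * y) = y := by rw [← mul_assoc, hy1]
  have u_hx2 : z * (x * z) = z := by rw [← mul_assoc, hx2]
  have hef : Idem (z * x * (y * w)) := hE _ _ he1 hf1
  have hfe : Idem (y * w * (z * x)) := hE _ _ hf1 he1
  have t_hef : ∀ t, z*(x*(y*(w*(z*(x*(y*(w*t))))))) = z*(x*(y*(w*t))) := by
    intro t
    have := congrArg (· * t) hef
    simp only [mul_assoc] at this
    exact this
  have t_hfe : ∀ t, y*(w*(z*(x*(y*(w*(z*(x*t))))))) = y*(w*(z*(x*t))) := by
    intro t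
    have := congrArg (· * t) hfe
    simp only [mul_assoc] at this
    exact this
  constructor
  · show x * y * (w * z) * (x * y) = x * y
    have key : x*(y*(w*(z*(x*y)))) = x*y := by
      calc x*(y*(w*(z*(x*y))))
          = x*(z*(x*(y*(w*(z*(x*y)))))) := (t_hx1 _).symm
        _ = x*(z*(x*(y*(w*(z*(x*(y*(w*y)))))))) := by rw [u_hy1]
        _ = x*(z*(x*(y*(w*y)))) := by rw [t_hef]
        _ = x*(y*(w*y)) := t_hx1 _
        _ = x*y := by rw [u_hy1]
    calc x * y * (w * z) * (x * y) = x*(y*(w*(z*(x*y)))) := by simp only [mul_assoc]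
    _ = x*y := key
  · show (w * z) * (x * y) * (w * z) = w * z
    have key : w*(z*(x*(y*(w*z)))) = w*z := by
      calc w*(z*(x*(y*(w*z))))
          = w*(y*(w*(z*(x*(y*(w*z)))))) := (t_hy2 _).symm
        _ = w*(y*(w*(z*(x*(y*(w*(z*(x*z)))))))) := by rw [u_hx2]
        _ = w*(y*(w*(z*(x*z))))  := by rw [t_hfe]
        _ = w*(z*(x*z)) := t_hy2 _
        _ = w*z := by rw [u_hx2]
    calc (w * z) * (x * y) * (w * z) = w*(z*(x*(y*(w*z)))) := by simp only [mul_assoc]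
    _ = w*z := key


lemma gam_mul_right (hE : ∀ e f : M, Idem e → Idem f → Idem (e * f))
    (hreg : ∀ x : M, ∃ y, x * y * x = x)
    {x y : M} (h : Gam x y) (w : M) : Gam (x * w) (y * w) := by
  obtain ⟨z, hx, hy⟩ := h
  obtain ⟨w', hw⟩ := pinv_of_reg hreg w
  exact ⟨w' * z, pinv_mul hE hx hw, pinv_mul hE hy hw⟩

lemma gam_mul_left (hE : ∀ e f : M, Idem e → Idem f → Idem (e * f))
    (hreg : ∀ x : M, ∃ y, x * y * x = x)
    {x y : M} (h : Gam x y) (w : M) : Gam (w * x) (w * y) := by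
  obtain ⟨z, hx, hy⟩ := h
  obtain ⟨w', hw⟩ := pinv_of_reg hreg w
  exact ⟨z * w', pinv_mul hE hw hx, pinv_mul hE hw hy⟩

lemma rho_mul_right (hE : ∀ e f : M, Idem e → Idem f → Idem (e * f))
    (hreg : ∀ x : M, ∃ y, x * y * x = x)
    {x y : M} (h : Rho x y) (w : M) : Rho (x * w) (y * w) := by
  induction h with
  | refl => exact Relation.ReflTransGen.refl
  | tail _ hstep ih => exact ih.tail (gam_mul_right hE hreg hstep w)

lemma rho_mul_left (hE : ∀ e f : M, Idem e → Idem f → Idem (e * f))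
    (hreg : ∀ x : M, ∃ y, x * y * x = x)
    {x y : M} (h : Rho x y) (w : M) : Rho (w * x) (w * y) := by
  induction h with
  | refl => exact Relation.ReflTransGen.refl
  | tail _ hstep ih => exact ih.tail (gam_mul_left hE hreg hstep w)

lemma rho_mul_congr (hE : ∀ e f : M, Idem e → Idem f → Idem (e * f))
    (hreg : ∀ x : M, ∃ y, x * y * x = x)
    {x y x' y' : M} (hx : Rho x x') (hy : Rho y y') :
    Rho (x * y) (x' * y') :=
  (rho_mul_right hE hreg hx y).trans (rho_mul_left hE hreg hy x')

lemma rho_econj (hE : ∀ e f : M, Idem e → Idem f → Idem (e * f))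
    (hreg : ∀ x : M, ∃ y, x * y * x = x)
    {x y : M} (h : Rho x y) : EConj x y := by
  induction h with
  | refl =>
      obtain ⟨z, hz1, hz2⟩ := pinv_of_reg hreg x
      refine ⟨x * z, z * x, ?_, ?_, ?_⟩
      · show x*z*(x*z) = x*z
        calc x*z*(x*z) = x*z*x*z := by simp only [mul_assoc]
        _ = x*z := by rw [hz1]
      · show z*x*(z*x) = z*x
        calc z*x*(z*x) = z*(x*z*x) := by simp only [mul_assoc]
        _ = z*x := by rw [hz1]
      · have : x*z*(x*(z*x)) = x := by
          calc x*z*(x*(z*x)) = x*z*x*z*x := by simp only [mul_assoc]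
          _ = x := by rw [hz1, hz1]
        exact this.symm
  | @tail y' z _ hstep ih =>
      obtain ⟨u, v, hu, hv, hxy⟩ := ih
      obtain ⟨w, hy'w, hzw⟩ := hstep
      have h1 : y' = (y' * w) * (z * (w * y')) := by
        have hww : w * z * w = w := hzw.2
        calc y' = y' * w * y' := hy'w.1.symm
        _ = y' * (w*z*w) * y' := by rw [hww]
        _ = (y' * w) * (z * (w * y')) := by simp only [mul_assoc]
      have hu2 : Idem (y' * w) := by
        show y'*w*(y'*w) = y'*w
        calc y'*w*(y'*w) = y'*w*y'*w := by simp only [mul_assoc]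
        _ = y'*w := by rw [hy'w.1]
      have hv2 : Idem (w * y') := by
        show w*y'*(w*y') = w*y'
        calc w*y'*(w*y') = w*(y'*w*y') := by simp only [mul_assoc]
        _ = w*y' := by rw [hy'w.1]
      refine ⟨u * (y' * w), (w * y') * v, hE _ _ hu hu2, hE _ _ hv2 hv, ?_⟩
      calc x = u * (y' * v) := hxy
      _ = u * (((y' * w) * (z * (w * y'))) * v) := by rw [← h1]
      _ = u * (y' * w) * (z * ((w * y') * v)) := by simp only [mul_assoc]

/-- the rectangular band fact -/
lemma bandFact (hE : ∀ e f : M, Idem e → Idem f → Idem (e * f))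
    {e f : M} (he : Idem e) (hf : Idem f)
    (h1 : EConj e f) (h2 : EConj f e) : e * (f * e) = e := by
  obtain ⟨u, v, hu, hv, heq⟩ := h1
  obtain ⟨p, q, hp, hq, hfq⟩ := h2
  have he' : e * e = e := he
  have hf' : f * f = f := hf
  set u₁ := e * (u * f) with hu₁d
  set v₁ := f * (v * e) with hv₁d
  set p₁ := f * (p * e) with hp₁d
  set q₁ := e * (q * f) with hq₁d
  have hu₁ : u₁ * u₁ = u₁ := hE _ _ he (hE _ _ hu hf)
  have hv₁ : v₁ * v₁ = v₁ := hE _ _ hf (hE _ _ hv he)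
  have hp₁ : p₁ * p₁ = p₁ := hE _ _ hf (hE _ _ hp he)
  have hq₁ : q₁ * q₁ = q₁ := hE _ _ he (hE _ _ hq hf)
  have te : ∀ t, e * (e * t) = e * t := tail2 he'
  have tf : ∀ t, f * (f * t) = f * t := tail2 hf'
  have heuv : e = u₁ * v₁ := by
    calc e = e * e := he'.symm
    _ = e * (e * e) := by rw [te]
    _ = e * ((u * (f * v)) * e) := by rw [← heq]
    _ = e * (u * (f * (v * e))) := by simp only [mul_assoc]
    _ = e * (u * (f * (f * (v * e)))) := by rw [tf]
    _ = u₁ * v₁ := by simp only [hu₁d, hv₁d, mul_assoc]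
  have hfpq : f = p₁ * q₁ := by
    calc f = f * f := hf'.symm
    _ = f * (f * f) := by rw [tf]
    _ = f * ((p * (e * q)) * f) := by rw [← hfq]
    _ = f * (p * (e * (q * f))) := by simp only [mul_assoc]
    _ = f * (p * (e * (e * (q * f)))) := by rw [te]
    _ = p₁ * q₁ := by simp only [hp₁d, hq₁d, mul_assoc]
  have u₁f : u₁ * f = u₁ := by
    simp only [hu₁d, mul_assoc]; rw [hf']
  have fv₁ : f * v₁ = v₁ := by simp only [hv₁d]; rw [← mul_assoc, hf']
  have v₁e : v₁ * e = v₁ := by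
    simp only [hv₁d, mul_assoc]; rw [he']
  have fp₁ : f * p₁ = p₁ := by simp only [hp₁d]; rw [← mul_assoc, hf']
  have p₁e : p₁ * e = p₁ := by
    simp only [hp₁d, mul_assoc]; rw [he']
  have eq₁ : e * q₁ = q₁ := by simp only [hq₁d]; rw [← mul_assoc, he']
  have hXY : e = (u₁ * p₁) * (q₁ * v₁) := by
    calc e = u₁ * v₁ := heuv
    _ = u₁ * (f * v₁) := by rw [fv₁]
    _ = u₁ * ((p₁ * q₁) * v₁) := by rw [← hfpq]
    _ = (u₁ * p₁) * (q₁ * v₁) := by simp only [mul_assoc]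
  have hXi : (u₁ * p₁) * (u₁ * p₁) = u₁ * p₁ := hE _ _ hu₁ hp₁
  have hYi : (q₁ * v₁) * (q₁ * v₁) = q₁ * v₁ := hE _ _ hq₁ hv₁
  have hXe : (u₁ * p₁) * e = u₁ * p₁ := by rw [mul_assoc, p₁e]
  have hX : u₁ * p₁ = e := by
    calc u₁ * p₁ = (u₁ * p₁) * e := hXe.symm
    _ = (u₁ * p₁) * ((u₁ * p₁) * (q₁ * v₁)) := by rw [← hXY]
    _ = ((u₁ * p₁) * (u₁ * p₁)) * (q₁ * v₁) := by simp only [mul_assoc]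
    _ = (u₁ * p₁) * (q₁ * v₁) := by rw [hXi]
    _ = e := hXY.symm
  have heY : e * (q₁ * v₁) = q₁ * v₁ := by rw [← mul_assoc, eq₁]
  have hY : q₁ * v₁ = e := by
    calc q₁ * v₁ = e * (q₁ * v₁) := heY.symm
    _ = ((u₁ * p₁) * (q₁ * v₁)) * (q₁ * v₁) := by rw [← hXY]
    _ = (u₁ * p₁) * ((q₁ * v₁) * (q₁ * v₁)) := by simp only [mul_assoc]
    _ = (u₁ * p₁) * (q₁ * v₁) := by rw [hYi]
    _ = e := hXY.symm
  have hXY' : f = (p₁ * u₁) * (v₁ * q₁) := by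
    calc f = p₁ * q₁ := hfpq
    _ = p₁ * (e * q₁) := by rw [eq₁]
    _ = p₁ * ((u₁ * v₁) * q₁) := by rw [← heuv]
    _ = (p₁ * u₁) * (v₁ * q₁) := by simp only [mul_assoc]
  have hYi' : (v₁ * q₁) * (v₁ * q₁) = v₁ * q₁ := hE _ _ hv₁ hq₁
  have hY' : v₁ * q₁ = f := by
    have hfY : f * (v₁ * q₁) = v₁ * q₁ := by rw [← mul_assoc, fv₁]
    calc v₁ * q₁ = f * (v₁ * q₁) := hfY.symm
    _ = ((p₁ * u₁) * (v₁ * q₁)) * (v₁ * q₁) := by rw [← hXY']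
    _ = (p₁ * u₁) * ((v₁ * q₁) * (v₁ * q₁)) := by simp only [mul_assoc]
    _ = (p₁ * u₁) * (v₁ * q₁) := by rw [hYi']
    _ = f := hXY'.symm
  calc e * (f * e) = (q₁ * v₁) * ((v₁ * q₁) * (q₁ * v₁)) := by rw [hY, hY']
  _ = q₁ * ((v₁ * v₁) * ((q₁ * q₁) * v₁)) := by simp only [mul_assoc]
  _ = q₁ * (v₁ * (q₁ * v₁)) := by rw [hv₁, hq₁]
  _ = (q₁ * v₁) * (q₁ * v₁) := by simp only [mul_assoc]
  _ = e * e := by rw [hY]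
  _ = e := he'

variable (A B : M)

def Cc (m n : ℕ) : M := B ^ m * ((A * B) * A ^ n)

def vv (k : ℕ) : M := Cc A B k k

section Words
variable {A B}
variable (h1 : A * B * A = A) (h2 : B * A * B = B) (h3 : A * B = A * A * (B * B))
include h1 h2 h3

lemma UU : (A * B) * (A * B) = A * B := by rw [← mul_assoc, h1]

lemma tUU : ∀ t, (A*B) * ((A*B) * t) = (A*B) * t := tail2 (UU h1 h2 h3)

lemma UA : (A * B) * A = A := h1

lemma tUA : ∀ t, (A*B) * (A * t) = A * t := tail2 h1

lemma BU : B * (A * B) = B := by rw [← mul_assoc]; exact h2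

lemma tBU : ∀ t, B * ((A*B) * t) = B * t := tail2 (BU h1 h2 h3)

lemma AUB : A * ((A * B) * B) = A * B := by
  have h3' := h3
  simp only [mul_assoc] at h3'
  simp only [mul_assoc]
  exact h3'.symm

lemma ABpow : ∀ n : ℕ, A ^ (n+1) * B ^ (n+1) = A * B := by
  intro n
  induction n with
  | zero => simp [pow_one]
  | succ n ih =>
      have e1 : A ^ (n+2) = A * A ^ (n+1) := by rw [pow_succ']
      have e2 : B ^ (n+2) = B ^ (n+1) * B := by rw [pow_succ]
      calc A ^ (n+2) * B ^ (n+2) = (A * A^(n+1)) * (B^(n+1) * B) := by rw [e1, e2]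
      _ = A * ((A^(n+1) * B^(n+1)) * B) := by simp only [mul_assoc]
      _ = A * ((A*B) * B) := by rw [ih]
      _ = A * B := AUB h1 h2 h3

lemma tABpow : ∀ (n : ℕ) (t : M), A^(n+1) * (B^(n+1) * t) = (A*B) * t :=
  fun n => tail2 (ABpow h1 h2 h3 n)

lemma tpow0 : ∀ (p : ℕ) (t : M), A^p * (B^p * ((A*B) * t)) = (A*B) * t := by
  intro p t
  cases p with
  | zero => simp
  | succ p => rw [tABpow h1 h2 h3, tUU h1 h2 h3]

lemma tpow1 : ∀ (p : ℕ) (t : M), (A*B) * (A^p * (B^p * t)) = (A*B) * t := by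
  intro p t
  cases p with
  | zero => simp
  | succ p => rw [tABpow h1 h2 h3, tUU h1 h2 h3]

lemma UApow : ∀ n : ℕ, (A*B) * A^(n+1) = A^(n+1) := by
  intro n
  rw [pow_succ', tUA h1 h2 h3]

lemma tUApow : ∀ (n : ℕ) (t : M), (A*B) * (A^(n+1) * t) = A^(n+1) * t :=
  fun n => tail2 (UApow h1 h2 h3 n)

lemma BpowU : ∀ m : ℕ, B^(m+1) * (A*B) = B^(m+1) := by
  intro m
  rw [pow_succ, mul_assoc, BU h1 h2 h3]

lemma tBpowU : ∀ (m : ℕ) (t : M), B^(m+1) * ((A*B) * t) = B^(m+1) * t :=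
  fun m => tail2 (BpowU h1 h2 h3 m)

lemma Cc_mul_inv (m n : ℕ) : Cc A B m n * Cc A B n m = vv A B m := by
  show (B^m * ((A*B) * A^n)) * (B^n * ((A*B) * A^m)) = B^m * ((A*B) * A^m)
  calc (B^m * ((A*B) * A^n)) * (B^n * ((A*B) * A^m))
      = B^m * ((A*B) * (A^n * (B^n * ((A*B) * A^m)))) := by simp only [mul_assoc]
    _ = B^m * ((A*B) * ((A*B) * A^m)) := by rw [tpow0 h1 h2 h3]
    _ = B^m * ((A*B) * A^m) := by rw [tUU h1 h2 h3]

lemma vv_idem (k : ℕ) : Idem (vv A B k) := by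
  show vv A B k * vv A B k = vv A B k
  have := Cc_mul_inv h1 h2 h3 k k
  exact this

lemma VCC (m n : ℕ) : vv A B m * Cc A B m n = Cc A B m n := by
  show (B^m * ((A*B) * A^m)) * (B^m * ((A*B) * A^n)) = B^m * ((A*B) * A^n)
  calc (B^m * ((A*B) * A^m)) * (B^m * ((A*B) * A^n))
      = B^m * ((A*B) * (A^m * (B^m * ((A*B) * A^n)))) := by simp only [mul_assoc]
    _ = B^m * ((A*B) * ((A*B) * A^n)) := by rw [tpow0 h1 h2 h3]
    _ = B^m * ((A*B) * A^n) := by rw [tUU h1 h2 h3]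

lemma CCV (m n : ℕ) : Cc A B m n * vv A B n = Cc A B m n := by
  show (B^m * ((A*B) * A^n)) * (B^n * ((A*B) * A^n)) = B^m * ((A*B) * A^n)
  calc (B^m * ((A*B) * A^n)) * (B^n * ((A*B) * A^n))
      = B^m * ((A*B) * (A^n * (B^n * ((A*B) * A^n)))) := by simp only [mul_assoc]
    _ = B^m * ((A*B) * ((A*B) * A^n)) := by rw [tpow0 h1 h2 h3]
    _ = B^m * ((A*B) * A^n) := by rw [tUU h1 h2 h3]

lemma VVlem (i d : ℕ) : vv A B ((i+1)+d) * vv A B (i+1) = vv A B ((i+1)+d) := by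
  show (B^((i+1)+d) * ((A*B) * A^((i+1)+d))) * (B^(i+1) * ((A*B) * A^(i+1)))
      = B^((i+1)+d) * ((A*B) * A^((i+1)+d))
  have hsplit : A^((i+1)+d) = A^d * A^(i+1) := by
    rw [← pow_add, Nat.add_comm d (i+1)]
  calc (B^((i+1)+d) * ((A*B) * A^((i+1)+d))) * (B^(i+1) * ((A*B) * A^(i+1)))
      = B^((i+1)+d) * ((A*B) * (A^d * (A^(i+1) * (B^(i+1) * ((A*B) * A^(i+1)))))) := by
        rw [hsplit]; simp only [mul_assoc]
    _ = B^((i+1)+d) * ((A*B) * (A^d * ((A*B) * ((A*B) * A^(i+1))))) := by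
        rw [tABpow h1 h2 h3]
    _ = B^((i+1)+d) * ((A*B) * (A^d * ((A*B) * A^(i+1)))) := by rw [tUU h1 h2 h3]
    _ = B^((i+1)+d) * ((A*B) * (A^d * A^(i+1))) := by rw [UApow h1 h2 h3]
    _ = B^((i+1)+d) * ((A*B) * A^((i+1)+d)) := by rw [← hsplit]

lemma A_vv (i : ℕ) : A^(i+1) * vv A B (i+1) = A^(i+1) := by
  show A^(i+1) * (B^(i+1) * ((A*B) * A^(i+1))) = A^(i+1)
  rw [tABpow h1 h2 h3, tUU h1 h2 h3, UApow h1 h2 h3]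

lemma tA_vv : ∀ (i : ℕ) (t : M), A^(i+1) * (vv A B (i+1) * t) = A^(i+1) * t :=
  fun i => tail2 (A_vv h1 h2 h3 i)

lemma vv_B (i : ℕ) : vv A B (i+1) * B^(i+1) = B^(i+1) := by
  show (B^(i+1) * ((A*B) * A^(i+1))) * B^(i+1) = B^(i+1)
  calc (B^(i+1) * ((A*B) * A^(i+1))) * B^(i+1)
      = B^(i+1) * ((A*B) * (A^(i+1) * B^(i+1))) := by simp only [mul_assoc]
    _ = B^(i+1) * ((A*B) * (A*B)) := by rw [ABpow h1 h2 h3]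
    _ = B^(i+1) * (A*B) := by rw [UU h1 h2 h3]
    _ = B^(i+1) := BpowU h1 h2 h3 _

lemma vv_succ (k : ℕ) : B * (vv A B k * A) = vv A B (k+1) := by
  show B * ((B^k * ((A*B) * A^k)) * A) = B^(k+1) * ((A*B) * A^(k+1))
  rw [pow_succ' B k, pow_succ A k]
  simp only [mul_assoc]

lemma gAU : Gam (A * (A*B)) A := by
  refine ⟨B, ⟨?_, ?_⟩, ⟨h1, h2⟩⟩
  · have key1 : (A * (A*B)) * B = A * B := by
      rw [mul_assoc]; exact AUB h1 h2 h3
    calc (A * (A*B)) * B * (A * (A*B)) = (A*B) * (A * (A*B)) := by rw [key1]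
    _ = ((A*B) * A) * (A*B) := by rw [← mul_assoc]
    _ = A * (A*B) := by rw [h1]
  · have key1 : (A * (A*B)) * B = A * B := by
      rw [mul_assoc]; exact AUB h1 h2 h3
    calc B * (A * (A*B)) * B = B * ((A * (A*B)) * B) := by rw [mul_assoc]
    _ = B * (A*B) := by rw [key1]
    _ = B := BU h1 h2 h3

lemma gUB : Gam ((A*B) * B) B := by
  refine ⟨A, ⟨?_, ?_⟩, ⟨h2, h1⟩⟩
  · have key2 : A * ((A*B) * B) = A * B := AUB h1 h2 h3
    calc ((A*B) * B) * A * ((A*B) * B) = ((A*B) * B) * (A * ((A*B) * B)) := by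
          rw [mul_assoc]
    _ = ((A*B) * B) * (A*B) := by rw [key2]
    _ = (A*B) * (B * (A*B)) := by rw [mul_assoc]
    _ = (A*B) * B := by rw [BU h1 h2 h3]
  · have key2 : A * ((A*B) * B) = A * B := AUB h1 h2 h3
    calc A * ((A*B) * B) * A = (A*B) * A := by rw [key2]
    _ = A := h1

end Words
section Words2
variable {A B : M}
variable (h1 : A * B * A = A) (h2 : B * A * B = B) (h3 : A * B = A * A * (B * B))

include h1 h2 h3

lemma Cmul (hE : ∀ e f : M, Idem e → Idem f → Idem (e * f))
    (hreg : ∀ x : M, ∃ y, x * y * x = x) (m n p q : ℕ) :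
    Rho (Cc A B m n * Cc A B p q) (Cc A B (m + (p - n)) ((n - p) + q)) := by
  rcases Nat.le_total p n with hpn | hnp
  · -- p ≤ n
    obtain ⟨k, hk⟩ : ∃ k, n = k + p := ⟨n - p, by omega⟩
    have hi1 : m + (p - n) = m := by omega
    have hi2 : (n - p) + q = k + q := by omega
    rw [hi1, hi2]
    have hkey : Cc A B m n * Cc A B p q = B^m * ((A*B) * (A^k * ((A*B) * A^q))) := by
      show (B^m * ((A*B) * A^n)) * (B^p * ((A*B) * A^q)) = _
      rw [hk, pow_add]
      calc (B^m * ((A*B) * (A^k * A^p))) * (B^p * ((A*B) * A^q))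
          = B^m * ((A*B) * (A^k * (A^p * (B^p * ((A*B) * A^q))))) := by
            simp only [mul_assoc]
        _ = B^m * ((A*B) * (A^k * ((A*B) * A^q))) := by rw [tpow0 h1 h2 h3]
    rw [hkey]
    cases k with
    | zero =>
      rw [pow_zero, one_mul, tUU h1 h2 h3, zero_add]
      exact Relation.ReflTransGen.refl
    | succ k' =>
      have g : Rho (A * (A*B)) A := rho_of_gam (gAU h1 h2 h3)
      have g2 : Rho (A^k' * ((A * (A*B)) * A^q)) (A^k' * (A * A^q)) :=
        rho_mul_left hE hreg (rho_mul_right hE hreg g _) _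
      have e1 : A^(k'+1) * ((A*B) * A^q) = A^k' * ((A * (A*B)) * A^q) := by
        rw [pow_succ]; simp only [mul_assoc]
      have e2 : A^k' * (A * A^q) = A^((k'+1)+q) := by
        rw [show (k'+1)+q = k'+(1+q) from by omega, pow_add, pow_add, pow_one]
        try simp only [mul_assoc]
      have lift := rho_mul_left hE hreg (rho_mul_left hE hreg g2 (A*B)) (B^m)
      rw [← e1, e2] at lift
      exact lift
  · -- n ≤ p
    obtain ⟨k, hk⟩ : ∃ k, p = n + k := ⟨p - n, by omega⟩
    have hi1 : m + (p - n) = m + k := by omega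
    have hi2 : (n - p) + q = q := by omega
    rw [hi1, hi2]
    have hkey : Cc A B m n * Cc A B p q = B^m * ((A*B) * (B^k * ((A*B) * A^q))) := by
      show (B^m * ((A*B) * A^n)) * (B^p * ((A*B) * A^q)) = _
      rw [hk, pow_add]
      calc (B^m * ((A*B) * A^n)) * ((B^n * B^k) * ((A*B) * A^q))
          = B^m * ((A*B) * (A^n * (B^n * (B^k * ((A*B) * A^q))))) := by
            simp only [mul_assoc]
        _ = B^m * ((A*B) * (B^k * ((A*B) * A^q))) := by rw [tpow1 h1 h2 h3]
    rw [hkey]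
    cases k with
    | zero =>
      rw [pow_zero, one_mul, tUU h1 h2 h3, Nat.add_zero]
      exact Relation.ReflTransGen.refl
    | succ k' =>
      have g : Rho ((A*B) * B) B := rho_of_gam (gUB h1 h2 h3)
      have g2 : Rho (((A*B) * B) * (B^k' * ((A*B) * A^q))) (B * (B^k' * ((A*B) * A^q))) :=
        rho_mul_right hE hreg g _
      have e1 : (A*B) * (B^(k'+1) * ((A*B) * A^q)) = ((A*B) * B) * (B^k' * ((A*B) * A^q)) := by
        rw [pow_succ']; simp only [mul_assoc]
      have e2 : B^m * (B * (B^k' * ((A*B) * A^q))) = Cc A B (m + (k'+1)) q := by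
        show _ = B^(m+(k'+1)) * ((A*B) * A^q)
        rw [show m+(k'+1) = m+1+k' from by omega, pow_add, pow_add, pow_one]
        simp only [mul_assoc]
      have lift := rho_mul_left hE hreg g2 (B^m)
      rw [← e1, e2] at lift
      exact lift

lemma eqn_false (h4 : ¬ (B*A = B*B*(A*A))) (d : ℕ)
    (h : (A*B) * (B^(d+1) * ((A*B) * (A^(d+1) * (A*B)))) = A*B) : False := by
  -- step 1 : vv (d+2) = vv 1
  have vEq : vv A B (d+2) = vv A B 1 := by
    have hc := congrArg (fun t => B * (t * A)) h
    have lhs_eq : B * (((A*B) * (B^(d+1) * ((A*B) * (A^(d+1) * (A*B))))) * A)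
        = vv A B (d+2) := by
      calc B * (((A*B) * (B^(d+1) * ((A*B) * (A^(d+1) * (A*B))))) * A)
          = B * ((A*B) * (B^(d+1) * ((A*B) * (A^(d+1) * ((A*B) * A))))) := by
            simp only [mul_assoc]
        _ = B * ((A*B) * (B^(d+1) * ((A*B) * (A^(d+1) * A)))) := by rw [h1]
        _ = B * (B^(d+1) * ((A*B) * (A^(d+1) * A))) := by rw [tBU h1 h2 h3]
        _ = B^(d+2) * ((A*B) * A^(d+2)) := by
            rw [pow_succ' B (d+1), pow_succ A (d+1)]
            simp only [mul_assoc]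
        _ = vv A B (d+2) := rfl
    have rhs_eq : B * ((A*B) * A) = vv A B 1 := by
      show _ = B^1 * ((A*B) * A^1)
      rw [pow_one, pow_one]
    rw [lhs_eq, rhs_eq] at hc
    exact hc
  -- step 2 : shift
  have hshift : ∀ j : ℕ, vv A B (j+1) = vv A B ((j+1)+(d+1)) := by
    intro j
    induction j with
    | zero =>
        rw [show 0+1+(d+1) = d+2 from by omega]
        exact vEq.symm
    | succ j ih =>
        have hc := congrArg (fun t => B * (t * A)) ih
        rw [vv_succ h1 h2 h3, vv_succ h1 h2 h3] at hc
        rw [show j+1+1+(d+1) = (j+1+(d+1))+1 from by omega]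
        exact hc
  -- step 3 : vv 1 = vv 1 * vv 2
  have h12 : vv A B 1 = vv A B 1 * vv A B 2 := by
    have hVV := VVlem h1 h2 h3 1 d
    rw [show (1+1)+d = d+2 from by omega] at hVV
    have h0 := hshift 0
    rw [show 0+1+(d+1) = d+2 from by omega] at h0
    calc vv A B 1 = vv A B (d+2) := h0
    _ = vv A B (d+2) * vv A B 2 := hVV.symm
    _ = vv A B 1 * vv A B 2 := by rw [← h0]
  -- step 4
  have hA1 : A * vv A B 1 = A := by
    show A * (B^1 * ((A*B) * A^1)) = A
    rw [pow_one, pow_one, ← mul_assoc, tUU h1 h2 h3, h1]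
  have hv1B : vv A B 1 * B = B := by
    show (B^1 * ((A*B) * A^1)) * B = B
    rw [pow_one, pow_one, h1]
    exact h2
  -- step 4 : A*B = (A*B)*(B*(A*(A*B)))
  have hUBAU : A*B = (A*B) * (B * (A * (A*B))) := by
    have hc := congrArg (fun t => A * (t * B)) h12
    have lhs_eq : A * (vv A B 1 * B) = A * B := by rw [hv1B]
    have rhs_eq : A * ((vv A B 1 * vv A B 2) * B) = (A*B) * (B * (A * (A*B))) := by
      calc A * ((vv A B 1 * vv A B 2) * B)
          = A * (vv A B 1 * (vv A B 2 * B)) := by simp only [mul_assoc]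
        _ = A * (vv A B 2 * B) := tail2 hA1 _
        _ = A * (B^2 * ((A*B) * (A^2 * B))) := by
            show A * ((B^2 * ((A*B) * A^2)) * B) = _
            simp only [mul_assoc]
        _ = A * (B^2 * ((A*B) * (A * (A*B)))) := by
            rw [show A^2 * B = A * (A*B) from by rw [pow_two, mul_assoc]]
        _ = (A*B) * (B * ((A*B) * (A * (A*B)))) := by
            rw [pow_two]; simp only [mul_assoc]
        _ = (A*B) * (B * (A * (A*B))) := by rw [tBU h1 h2 h3]
    exact lhs_eq.symm.trans (hc.trans rhs_eq)
  -- step 5 : contradiction with h4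
  have hfin : B * A = B * (B * (A * A)) := by
    have hc := congrArg (fun t => B * (t * A)) hUBAU
    have lhs_eq : B * ((A*B) * A) = B * A := by rw [h1]
    have rhs_eq : B * (((A*B) * (B * (A * (A*B)))) * A) = B * (B * (A * A)) := by
      calc B * (((A*B) * (B * (A * (A*B)))) * A)
          = B * ((A*B) * (B * (A * ((A*B) * A)))) := by simp only [mul_assoc]
        _ = B * ((A*B) * (B * (A * A))) := by rw [h1]
        _ = B * (B * (A * A)) := by rw [tBU h1 h2 h3]
    rw [lhs_eq, rhs_eq] at hc
    exact hc
  exact h4 (by rw [mul_assoc]; exact hfin)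

lemma v_lemma (hE : ∀ e f : M, Idem e → Idem f → Idem (e * f))
    (hreg : ∀ x : M, ∃ y, x * y * x = x)
    (h4 : ¬ (B*A = B*B*(A*A))) (i d : ℕ)
    (h : Rho (vv A B i) (vv A B (i+d+1))) : False := by
  have hband := bandFact hE (vv_idem h1 h2 h3 i) (vv_idem h1 h2 h3 (i+d+1))
    (rho_econj hE hreg h) (rho_econj hE hreg (rho_symm h))
  cases i with
  | zero =>
    have hv0 : vv A B 0 = A*B := by
      show B^0 * ((A*B) * A^0) = A*B
      simp
    rw [hv0] at hband
    have hexp : vv A B (0+d+1) * (A*B) = B^(d+1) * ((A*B) * (A^(d+1) * (A*B))) := by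
      show (B^(0+d+1) * ((A*B) * A^(0+d+1))) * (A*B) = _
      rw [show 0+d+1 = d+1 from by omega]
      simp only [mul_assoc]
    rw [hexp] at hband
    exact eqn_false h1 h2 h3 h4 d hband
  | succ k =>
    have hVV : vv A B (k+1+d+1) * vv A B (k+1) = vv A B (k+1+d+1) := by
      have := VVlem h1 h2 h3 k (d+1)
      rwa [show (k+1)+(d+1) = k+1+d+1 from by omega] at this
    have hij : vv A B (k+1) * vv A B (k+1+d+1) = vv A B (k+1) := by
      rw [hVV] at hband
      exact hband
    have hsand := congrArg (fun t => A^(k+1) * (t * B^(k+1))) hij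
    have lhs_eq : A^(k+1) * ((vv A B (k+1) * vv A B (k+1+d+1)) * B^(k+1))
        = (A*B) * (B^(d+1) * ((A*B) * (A^(d+1) * (A*B)))) := by
      calc A^(k+1) * ((vv A B (k+1) * vv A B (k+1+d+1)) * B^(k+1))
          = A^(k+1) * (vv A B (k+1) * (vv A B (k+1+d+1) * B^(k+1))) := by
            simp only [mul_assoc]
        _ = A^(k+1) * (vv A B (k+1+d+1) * B^(k+1)) := tA_vv h1 h2 h3 _ _
        _ = A^(k+1) * (B^(k+1+d+1) * ((A*B) * (A^(k+1+d+1) * B^(k+1)))) := by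
            show A^(k+1) * ((B^(k+1+d+1) * ((A*B) * A^(k+1+d+1))) * B^(k+1)) = _
            simp only [mul_assoc]
        _ = A^(k+1) * (B^(k+1+d+1) * ((A*B) * (A^(d+1) * (A^(k+1) * B^(k+1))))) := by
            rw [show A^(k+1+d+1) = A^(d+1) * A^(k+1) from by
              rw [← pow_add, show d+1+(k+1) = k+1+d+1 from by omega]]
            simp only [mul_assoc]
        _ = A^(k+1) * (B^(k+1+d+1) * ((A*B) * (A^(d+1) * (A*B)))) := by
            rw [ABpow h1 h2 h3]
        _ = A^(k+1) * (B^(k+1) * (B^(d+1) * ((A*B) * (A^(d+1) * (A*B))))) := by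
            rw [show B^(k+1+d+1) = B^(k+1) * B^(d+1) from by
              rw [← pow_add, show k+1+(d+1) = k+1+d+1 from by omega]]
            simp only [mul_assoc]
        _ = (A*B) * (B^(d+1) * ((A*B) * (A^(d+1) * (A*B)))) := tABpow h1 h2 h3 _ _
    have rhs_eq : A^(k+1) * (vv A B (k+1) * B^(k+1)) = A*B := by
      rw [tA_vv h1 h2 h3]
      exact ABpow h1 h2 h3 k
    rw [lhs_eq, rhs_eq] at hsand
    exact eqn_false h1 h2 h3 h4 d hsand

/-- coordinate comparison, R side -/
lemma coord_left (hE : ∀ e f : M, Idem e → Idem f → Idem (e * f))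
    (hreg : ∀ x : M, ∃ y, x * y * x = x)
    (h4 : ¬ (B*A = B*B*(A*A))) {m n p q : ℕ} {X Y s : M}
    (hRX : Rho X (Cc A B m n)) (hRY : Rho Y (Cc A B p q)) (hs : X = Y * s) :
    p ≤ m := by
  by_contra hlt
  push_neg at hlt
  have hvY : Rho (vv A B p * Y) Y := by
    have hstep : Rho (vv A B p * Y) (vv A B p * Cc A B p q) := rho_mul_left hE hreg hRY _
    rw [VCC h1 h2 h3] at hstep
    exact hstep.trans (rho_symm hRY)
  have hvX : Rho (vv A B p * X) X := by
    rw [hs, ← mul_assoc]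
    exact rho_mul_right hE hreg hvY s
  have hvC : Rho (vv A B p * Cc A B m n) (Cc A B m n) :=
    (rho_mul_left hE hreg (rho_symm hRX) _).trans (hvX.trans hRX)
  have hCm := Cmul h1 h2 h3 hE hreg p p m n
  rw [show p + (m - p) = p from by omega] at hCm
  have hPC : Rho (Cc A B p ((p-m)+n)) (Cc A B m n) := (rho_symm hCm).trans hvC
  have hmul := rho_mul_right hE hreg hPC (Cc A B n m)
  have hL : Rho (Cc A B p ((p-m)+n) * Cc A B n m) (vv A B p) := by
    have := Cmul h1 h2 h3 hE hreg p ((p-m)+n) n m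
    rw [show p + (n - ((p-m)+n)) = p from by omega,
        show (((p-m)+n) - n) + m = p from by omega] at this
    exact this
  have hR : Rho (Cc A B m n * Cc A B n m) (vv A B m) := by
    rw [Cc_mul_inv h1 h2 h3]
    exact Relation.ReflTransGen.refl
  have hvv : Rho (vv A B p) (vv A B m) := (rho_symm hL).trans (hmul.trans hR)
  exact v_lemma h1 h2 h3 hE hreg h4 m (p - m - 1)
    (rho_symm (by rwa [show m + (p-m-1) + 1 = p from by omega]))

/-- coordinate comparison, L side -/
lemma coord_right (hE : ∀ e f : M, Idem e → Idem f → Idem (e * f))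
    (hreg : ∀ x : M, ∃ y, x * y * x = x)
    (h4 : ¬ (B*A = B*B*(A*A))) {m n p q : ℕ} {X Y s : M}
    (hRX : Rho X (Cc A B m n)) (hRY : Rho Y (Cc A B p q)) (hs : X = s * Y) :
    q ≤ n := by
  by_contra hlt
  push_neg at hlt
  have hvY : Rho (Y * vv A B q) Y := by
    have hstep : Rho (Y * vv A B q) (Cc A B p q * vv A B q) := rho_mul_right hE hreg hRY _
    rw [CCV h1 h2 h3] at hstep
    exact hstep.trans (rho_symm hRY)
  have hvX : Rho (X * vv A B q) X := by
    rw [hs, mul_assoc]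
    exact rho_mul_left hE hreg hvY s
  have hvC : Rho (Cc A B m n * vv A B q) (Cc A B m n) :=
    (rho_mul_right hE hreg (rho_symm hRX) _).trans (hvX.trans hRX)
  have hCm := Cmul h1 h2 h3 hE hreg m n q q
  rw [show (n - q) + q = q from by omega] at hCm
  have hPC : Rho (Cc A B (m+(q-n)) q) (Cc A B m n) := (rho_symm hCm).trans hvC
  have hmul := rho_mul_left hE hreg hPC (Cc A B n m)
  have hL : Rho (Cc A B n m * Cc A B (m+(q-n)) q) (vv A B q) := by
    have := Cmul h1 h2 h3 hE hreg n m (m+(q-n)) q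
    rw [show n + ((m+(q-n)) - m) = q from by omega,
        show (m - (m+(q-n))) + q = q from by omega] at this
    exact this
  have hR : Rho (Cc A B n m * Cc A B m n) (vv A B n) := by
    rw [Cc_mul_inv h1 h2 h3]
    exact Relation.ReflTransGen.refl
  have hvv : Rho (vv A B q) (vv A B n) := (rho_symm hL).trans (hmul.trans hR)
  exact v_lemma h1 h2 h3 hE hreg h4 n (q - n - 1)
    (rho_symm (by rwa [show n + (q-n-1) + 1 = q from by omega]))

/-- the main abstract lemma -/
lemma mainLemma (hE : ∀ e f : M, Idem e → Idem f → Idem (e * f))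
    (hreg : ∀ x : M, ∃ y, x * y * x = x)
    (h4 : ¬ (B*A = B*B*(A*A))) {X Y : M}
    (hX : ∃ m n, Rho X (Cc A B m n)) (hY : ∃ p q, Rho Y (Cc A B p q))
    (hR1 : ∃ s, X = Y * s) (hR2 : ∃ t, Y = X * t)
    (hL1 : ∃ s, X = s * Y) (hL2 : ∃ t, Y = t * X) : X = Y := by
  obtain ⟨m, n, RX⟩ := hX
  obtain ⟨p, q, RY⟩ := hY
  obtain ⟨s, hs⟩ := hR1
  obtain ⟨t, ht⟩ := hR2
  obtain ⟨s', hs'⟩ := hL1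
  obtain ⟨t', ht'⟩ := hL2
  have hmp : m = p :=
    le_antisymm (coord_left h1 h2 h3 hE hreg h4 RY RX ht)
      (coord_left h1 h2 h3 hE hreg h4 RX RY hs)
  have hnq : n = q :=
    le_antisymm (coord_right h1 h2 h3 hE hreg h4 RY RX ht')
      (coord_right h1 h2 h3 hE hreg h4 RX RY hs')
  subst hmp; subst hnq
  have RXY : Rho X Y := RX.trans (rho_symm RY)
  obtain ⟨u, v, hu, hv, hXuv⟩ := rho_econj hE hreg RXY
  have huX : u * X = X := by
    calc u * X = u * (u * (Y * v)) := by rw [← hXuv]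
    _ = (u * u) * (Y * v) := by rw [mul_assoc]
    _ = u * (Y * v) := by rw [hu]
    _ = X := hXuv.symm
  have huY : u * Y = Y := by
    calc u * Y = u * (X * t) := by rw [← ht]
    _ = (u * X) * t := by rw [mul_assoc]
    _ = X * t := by rw [huX]
    _ = Y := ht.symm
  have hXv : X * v = X := by
    calc X * v = (u * (Y * v)) * v := by rw [← hXuv]
    _ = u * (Y * (v * v)) := by simp only [mul_assoc]
    _ = u * (Y * v) := by rw [hv]
    _ = X := hXuv.symm
  have hYv : Y * v = Y := by
    calc Y * v = (t' * X) * v := by rw [← ht']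
    _ = t' * (X * v) := by rw [mul_assoc]
    _ = t' * X := by rw [hXv]
    _ = Y := ht'.symm
  calc X = u * (Y * v) := hXuv
  _ = u * Y := by rw [hYv]
  _ = Y := huY

end Words2
end Aux

theorem stmt13 {S : Type*} [Semigroup S] (hO : Orthodox S) (a b : S)
    (hgen : Subsemigroup.closure ({a, b} : Set S) = ⊤)
    (h1 : a * b * a = a) (h2 : b * a * b = b)
    (h3 : a * b = a * a * (b * b)) (h4 : b * a ≠ b * b * (a * a)) :
    ∀ x y : S, GreenH x y → x = y := by
  intro x y hxy
  obtain ⟨⟨⟨s, hs⟩, ⟨t, ht⟩⟩, ⟨⟨s', hs'⟩, ⟨t', ht'⟩⟩⟩ := hxy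
  have h1M : (a : WithOne S) * (b : WithOne S) * (a : WithOne S) = (a : WithOne S) := by
    exact_mod_cast congrArg (fun z : S => (z : WithOne S)) h1
  have h2M : (b : WithOne S) * (a : WithOne S) * (b : WithOne S) = (b : WithOne S) := by
    exact_mod_cast congrArg (fun z : S => (z : WithOne S)) h2
  have h3M : (a : WithOne S) * (b : WithOne S)
      = (a : WithOne S) * (a : WithOne S) * ((b : WithOne S) * (b : WithOne S)) := by
    exact_mod_cast congrArg (fun z : S => (z : WithOne S)) h3
  have h4M : ¬ ((b : WithOne S) * (a : WithOne S)
      = (b : WithOne S) * (b : WithOne S) * ((a : WithOne S) * (a : WithOne S))) := by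
    intro hcon
    exact h4 (by exact_mod_cast hcon)
  have hEM : ∀ e f : WithOne S, Idem e → Idem f → Idem (e * f) := by
    intro e f he hf
    rcases eq_or_ne e 1 with rfl | hne
    · simpa using hf
    · obtain ⟨e₀, rfl⟩ := WithOne.ne_one_iff_exists.mp hne
      rcases eq_or_ne f 1 with rfl | hnf
      · simpa using he
      · obtain ⟨f₀, rfl⟩ := WithOne.ne_one_iff_exists.mp hnf
        have he' : (e₀ : WithOne S) * (e₀ : WithOne S) = (e₀ : WithOne S) := he
        have hf' : (f₀ : WithOne S) * (f₀ : WithOne S) = (f₀ : WithOne S) := hf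
        have he₀ : e₀ * e₀ = e₀ := by exact_mod_cast he'
        have hf₀ : f₀ * f₀ = f₀ := by exact_mod_cast hf'
        show ((e₀ : WithOne S) * (f₀ : WithOne S)) * ((e₀ : WithOne S) * (f₀ : WithOne S))
            = (e₀ : WithOne S) * (f₀ : WithOne S)
        exact_mod_cast congrArg (fun z : S => (z : WithOne S)) (hO.2 e₀ f₀ he₀ hf₀)
  have hregM : ∀ z : WithOne S, ∃ w, z * w * z = z := by
    intro z
    rcases eq_or_ne z 1 with rfl | hne
    · exact ⟨1, by simp⟩
    · obtain ⟨z₀, rfl⟩ := WithOne.ne_one_iff_exists.mp hne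
      obtain ⟨y₀, hy₀⟩ := hO.1 z₀
      refine ⟨(y₀ : WithOne S), ?_⟩
      exact_mod_cast congrArg (fun z : S => (z : WithOne S)) hy₀
  have hNorm : ∀ s₀ : S, ∃ m n,
      Rho ((s₀ : WithOne S)) (Cc (a : WithOne S) (b : WithOne S) m n) := by
    intro s₀
    have hmem : s₀ ∈ Subsemigroup.closure ({a, b} : Set S) := by
      rw [hgen]; exact Subsemigroup.mem_top s₀
    induction hmem using Subsemigroup.closure_induction with
    | mem z hz =>
        simp only [Set.mem_insert_iff, Set.mem_singleton_iff] at hz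
        rcases hz with h | h
        · refine ⟨0, 1, ?_⟩
          rw [h]
          have hC : Cc (a : WithOne S) (b : WithOne S) 0 1 = (a : WithOne S) := by
            show (b : WithOne S) ^ 0 * (((a : WithOne S) * (b : WithOne S))
              * (a : WithOne S) ^ 1) = (a : WithOne S)
            rw [pow_zero, one_mul, pow_one]
            exact h1M
          rw [hC]
          exact Relation.ReflTransGen.refl
        · refine ⟨1, 0, ?_⟩
          rw [h]
          have hC : Cc (a : WithOne S) (b : WithOne S) 1 0 = (b : WithOne S) := by
            show (b : WithOne S) ^ 1 * (((a : WithOne S) * (b : WithOne S))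
              * (a : WithOne S) ^ 0) = (b : WithOne S)
            rw [pow_one, pow_zero, mul_one, ← mul_assoc]
            exact h2M
          rw [hC]
          exact Relation.ReflTransGen.refl
    | mul z w hz hw ihz ihw =>
        obtain ⟨m1, n1, hz'⟩ := ihz
        obtain ⟨m2, n2, hw'⟩ := ihw
        refine ⟨m1 + (m2 - n1), (n1 - m2) + n2, ?_⟩
        rw [WithOne.coe_mul]
        exact (rho_mul_congr hEM hregM hz' hw').trans
          (Cmul h1M h2M h3M hEM hregM m1 n1 m2 n2)
  have hXY : (x : WithOne S) = (y : WithOne S) :=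
    mainLemma h1M h2M h3M hEM hregM h4M (hNorm x) (hNorm y)
      ⟨s, hs⟩ ⟨t, ht⟩ ⟨s', hs'⟩ ⟨t', ht'⟩
  exact WithOne.coe_inj.mp hXY

end PaperStmt
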